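/- Let n ≥ 1 and let (X_i)_{i∈I} be a family of path-connected Hausdorff topological spaces such that the set of indices i ∈ I for which there exists an essential continuous map S^n → X_i is infinite. Then every point of the product Π_{i∈I} X_i (with the product topology) is a π_n-wild point of Π_{i∈I} X_i; that is, the product is perfectly π_n-wild. -/

import Mathlib

open Filter Topology

/-- The unit `n`-sphere in `ℝ^(n+1)`. -/
abbrev Sph (n : ℕ) : Type :=
  Metric.sphere (0 : EuclideanSpace ℝ (Fin (n + 1))) 1

/-- The basepoint `s₀ = (1,0,…,0)` of the unit `n`-sphere. -/
noncomputable def spherePt (n : ℕ) : Sph n :=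
  ⟨EuclideanSpace.single 0 1, by
    simp [mem_sphere_zero_iff_norm, EuclideanSpace.norm_single]⟩

/-- A continuous map `S^n → X` is essential if it is not homotopic to a constant map. -/
def Essential {n : ℕ} {X : Type*} [TopologicalSpace X] (f : C(Sph n, X)) : Prop :=
  ∀ x : X, ¬ f.Homotopic (ContinuousMap.const (Sph n) x)

/-- `x` is a `π_n`-wild point of `X` if there is a sequence of essential maps
`S^n → X` based at `x` converging to the constant map at `x` in the compact-open
topology. -/
def IsWildPoint (n : ℕ) {X : Type*} [TopologicalSpace X] (x : X) : Prop :=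
  ∃ f : ℕ → C(Sph n, X),
    (∀ k, f k (spherePt n) = x) ∧
    (∀ k, Essential (f k)) ∧
    Tendsto f atTop (𝓝 (ContinuousMap.const (Sph n) x))

/-- The `π_n`-wild set of `X`. -/
def wildSet (n : ℕ) (X : Type*) [TopologicalSpace X] : Set X :=
  {x | IsWildPoint n x}

/-- A continuous map is `π_n`-injective if precomposition reflects inessentiality. -/
def PiNInjective (n : ℕ) {X Y : Type*} [TopologicalSpace X] [TopologicalSpace Y]
    (f : C(X, Y)) : Prop :=
  ∀ g : C(Sph n, X),
    (∃ y : Y, (f.comp g).Homotopic (ContinuousMap.const (Sph n) y)) →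
    ∃ x : X, g.Homotopic (ContinuousMap.const (Sph n) x)

/-- `X` is `π_n`-rigid at `x`. -/
def IsRigidAt (n : ℕ) {X : Type*} [TopologicalSpace X] (x : X) : Prop :=
  ∃ f : ℕ → C(Sph n, X),
    (∀ k, f k (spherePt n) = x) ∧
    (∀ k, Essential (f k)) ∧
    Tendsto f atTop (𝓝 (ContinuousMap.const (Sph n) x)) ∧
    ∀ β : C(unitInterval, X), β 0 = x →
      ∀ H : ℕ → C(Sph n × unitInterval, X),
        (∀ k s, H k (s, 0) = f k s) →
        (∀ k t, H k (spherePt n, t) = β t) →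
        Tendsto H atTop (𝓝 (β.comp (ContinuousMap.snd (α := Sph n)))) →
        β 1 = x


open scoped RealInnerProductSpace

noncomputable section
namespace Stmt11Aux


/-- latitude reparametrization -/
def psi (u : ℝ) : ℝ := min (2*u+1) 1

/-- tail scaling factor -/
def cc (u : ℝ) : ℝ := Real.sqrt (max (-(4*u)) 0 / (1 - min u 0))

lemma continuous_psi : Continuous psi :=
  (((continuous_const.mul continuous_id).add continuous_const).min continuous_const)

lemma denom_pos (u : ℝ) : 0 < 1 - min u 0 := by
  have := min_le_right u 0; linarith

lemma continuous_cc : Continuous cc := by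
  apply Real.continuous_sqrt.comp
  exact ((continuous_const.mul continuous_id).neg.max continuous_const).div
    (continuous_const.sub (continuous_id.min continuous_const))
    (fun u => (denom_pos u).ne')

lemma cc_nonneg (u : ℝ) : 0 ≤ cc u := Real.sqrt_nonneg _

lemma cc_sq (u : ℝ) : cc u ^ 2 = max (-(4*u)) 0 / (1 - min u 0) :=
  Real.sq_sqrt (div_nonneg (le_max_right _ _) (denom_pos u).le)

lemma psi_eq_of_nonneg {u : ℝ} (h : 0 ≤ u) : psi u = 1 :=
  min_eq_right (by simp [psi]; linarith)

lemma cc_eq_zero_of_nonneg {u : ℝ} (h : 0 ≤ u) : cc u = 0 := by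
  have h1 : max (-(4*u)) 0 = 0 := max_eq_right (by linarith)
  simp [cc, h1]

lemma key_identity {u : ℝ} (h1 : -1 ≤ u) (h2 : u ≤ 1) :
    psi u ^ 2 + cc u ^ 2 * (1 - u^2) = 1 := by
  rcases le_or_gt u 0 with hu | hu
  · have hmin : min u 0 = u := min_eq_left hu
    have hmax : max (-(4*u)) 0 = -(4*u) := max_eq_left (by linarith)
    have hpsi : psi u = 2*u+1 := min_eq_left (by linarith)
    have hne : (1:ℝ) - u ≠ 0 := by linarith
    rw [cc_sq, hmin, hmax, hpsi]
    field_simp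
    ring
  · rw [psi_eq_of_nonneg hu.le, cc_eq_zero_of_nonneg hu.le]; ring

lemma u_mul_psi_ge (u : ℝ) : -(1/8 : ℝ) ≤ u * psi u := by
  rcases le_or_gt u 0 with hu | hu
  · have hpsi : psi u = 2*u+1 := min_eq_left (by linarith)
    rw [hpsi]; nlinarith [sq_nonneg (4*u+1)]
  · rw [psi_eq_of_nonneg hu.le]; linarith

variable (n : ℕ)

/-- north pole -/
def e0 : EuclideanSpace ℝ (Fin (n+1)) := EuclideanSpace.single 0 1

lemma norm_e0 : ‖e0 n‖ = 1 := by simp [e0, EuclideanSpace.norm_single]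

lemma inner_e0_left (s : EuclideanSpace ℝ (Fin (n+1))) : ⟪e0 n, s⟫ = s 0 := by
  simp [e0, EuclideanSpace.inner_single_left]

lemma inner_e0_e0 : ⟪e0 n, e0 n⟫ = (1:ℝ) := by
  rw [inner_e0_left]; simp [e0, EuclideanSpace.single_apply]

def phiFun (s : EuclideanSpace ℝ (Fin (n+1))) : EuclideanSpace ℝ (Fin (n+1)) :=
  psi (s 0) • e0 n + cc (s 0) • (s - (s 0) • e0 n)

lemma continuous_phiFun : Continuous (phiFun n) := by
  have h0 : Continuous fun s : EuclideanSpace ℝ (Fin (n+1)) => s 0 := PiLp.continuous_apply _ _ 0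
  exact ((continuous_psi.comp h0).smul continuous_const).add
    ((continuous_cc.comp h0).smul (continuous_id.sub (h0.smul continuous_const)))

lemma abs_coord_le (s : EuclideanSpace ℝ (Fin (n+1))) (hs : ‖s‖ = 1) : |s 0| ≤ 1 := by
  have h := abs_real_inner_le_norm (e0 n) s
  rwa [inner_e0_left, norm_e0, hs, one_mul] at h

lemma inner_tau (s : EuclideanSpace ℝ (Fin (n+1))) :
    ⟪e0 n, s - (s 0) • e0 n⟫ = 0 := by
  rw [inner_sub_right, real_inner_smul_right, inner_e0_left,
    real_inner_self_eq_norm_sq, norm_e0]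
  ring

lemma norm_tau_sq (s : EuclideanSpace ℝ (Fin (n+1))) (hs : ‖s‖ = 1) :
    ⟪s - (s 0) • e0 n, s - (s 0) • e0 n⟫ = 1 - (s 0)^2 := by
  have hse0 : ⟪s, e0 n⟫ = s 0 := by rw [real_inner_comm]; exact inner_e0_left n s
  have hss : ⟪s, s⟫ = (1:ℝ) := by
    rw [real_inner_self_eq_norm_sq, hs]; norm_num
  have he00 : e0 n 0 = 1 := by simp [e0, EuclideanSpace.single_apply]
  simp only [inner_sub_sub_self, real_inner_smul_left, real_inner_smul_right,
    hse0, inner_e0_left, inner_e0_e0, hss, he00]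
  ring

lemma norm_phiFun (s : EuclideanSpace ℝ (Fin (n+1))) (hs : ‖s‖ = 1) :
    ‖phiFun n s‖ = 1 := by
  have habs := abs_coord_le n s hs
  have h1 : -1 ≤ s 0 := neg_le_of_abs_le habs
  have h2 : s 0 ≤ 1 := le_of_abs_le habs
  have hsq : ‖phiFun n s‖^2 = 1 := by
    rw [← real_inner_self_eq_norm_sq]
    have expand : ⟪phiFun n s, phiFun n s⟫
        = psi (s 0)^2 * ⟪e0 n, e0 n⟫
          + 2 * (psi (s 0) * cc (s 0)) * ⟪e0 n, s - s 0 • e0 n⟫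
          + cc (s 0)^2 * ⟪s - s 0 • e0 n, s - s 0 • e0 n⟫ := by
      simp only [phiFun, inner_add_add_self, real_inner_smul_left, real_inner_smul_right,
        real_inner_comm (s - s 0 • e0 n) (e0 n)]
      ring
    rw [expand, inner_tau n s, inner_e0_e0, norm_tau_sq n s hs]
    have hk := key_identity h1 h2 (u := s 0)
    nlinarith [hk]
  have hnn := norm_nonneg (phiFun n s)
  nlinarith

lemma inner_self_phiFun (s : EuclideanSpace ℝ (Fin (n+1))) (hs : ‖s‖ = 1) :
    -(1/8 : ℝ) ≤ ⟪s, phiFun n s⟫ := by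
  have habs := abs_coord_le n s hs
  have h1 : -1 ≤ s 0 := neg_le_of_abs_le habs
  have h2 : s 0 ≤ 1 := le_of_abs_le habs
  have hx : ⟪s, phiFun n s⟫ = s 0 * psi (s 0) + cc (s 0) * (1 - (s 0)^2) := by
    have hse0 : ⟪s, e0 n⟫ = s 0 := by rw [real_inner_comm]; exact inner_e0_left n s
    have hss : ⟪s, s⟫ = (1:ℝ) := by
      rw [real_inner_self_eq_norm_sq, hs]; norm_num
    simp only [phiFun, inner_add_right, inner_sub_right, real_inner_smul_right, hse0, hss]
    ring
  rw [hx]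
  have hup := u_mul_psi_ge (s 0)
  have hc := cc_nonneg (s 0)
  have h3 : (0:ℝ) ≤ 1 - (s 0)^2 := by nlinarith
  nlinarith [mul_nonneg hc h3]

lemma phiFun_eq_e0_of_nonneg (s : EuclideanSpace ℝ (Fin (n+1))) (h : 0 ≤ s 0) :
    phiFun n s = e0 n := by
  unfold phiFun
  rw [psi_eq_of_nonneg h, cc_eq_zero_of_nonneg h, one_smul, zero_smul, add_zero]



lemma mem_sph (s : Sph n) : ‖(s : EuclideanSpace ℝ (Fin (n+1)))‖ = 1 :=
  mem_sphere_zero_iff_norm.mp s.2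

def phi : C(Sph n, Sph n) where
  toFun s := ⟨phiFun n s, by
      rw [mem_sphere_zero_iff_norm]
      exact norm_phiFun n s (mem_sph n s)⟩
  continuous_toFun := by
    apply Continuous.subtype_mk
    exact (continuous_phiFun n).comp continuous_subtype_val

lemma coe_phi (s : Sph n) : (phi n s : EuclideanSpace ℝ (Fin (n+1))) = phiFun n s := rfl

lemma phi_eq_pt {s : Sph n} (h : 0 ≤ (s : EuclideanSpace ℝ (Fin (n+1))) 0) :
    phi n s = spherePt n := by
  apply Subtype.ext
  rw [coe_phi, phiFun_eq_e0_of_nonneg n s h]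
  rfl

def vmap (p : unitInterval × Sph n) : EuclideanSpace ℝ (Fin (n+1)) :=
  (1 - (p.1 : ℝ)) • (phi n p.2 : EuclideanSpace ℝ (Fin (n+1)))
    + (p.1 : ℝ) • (p.2 : EuclideanSpace ℝ (Fin (n+1)))

lemma continuous_vmap : Continuous (vmap n) := by
  refine Continuous.add ?_ ?_
  · exact (continuous_const.sub (continuous_subtype_val.comp continuous_fst)).smul
      (continuous_subtype_val.comp ((phi n).continuous.comp continuous_snd))
  · exact (continuous_subtype_val.comp continuous_fst).smul
      (continuous_subtype_val.comp continuous_snd)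

lemma norm_vmap_pos (p : unitInterval × Sph n) : 0 < ‖vmap n p‖ := by
  obtain ⟨t, s⟩ := p
  have hs : ‖(s : EuclideanSpace ℝ (Fin (n+1)))‖ = 1 := mem_sph n s
  have hφ : ‖(phi n s : EuclideanSpace ℝ (Fin (n+1)))‖ = 1 := mem_sph n (phi n s)
  have hin : -(1/8 : ℝ) ≤ ⟪(s : EuclideanSpace ℝ (Fin (n+1))),
      (phi n s : EuclideanSpace ℝ (Fin (n+1)))⟫ := inner_self_phiFun n s hs
  have ht0 : (0:ℝ) ≤ (t : ℝ) := t.2.1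
  have ht1 : (t : ℝ) ≤ 1 := t.2.2
  have hsq : ‖vmap n (t, s)‖^2
      = (1 - (t:ℝ))^2 + 2 * ((1-(t:ℝ)) * (t:ℝ))
          * ⟪(phi n s : EuclideanSpace ℝ (Fin (n+1))), (s : EuclideanSpace ℝ (Fin (n+1)))⟫
        + (t:ℝ)^2 := by
    show ‖(1 - (t:ℝ)) • (phi n s : EuclideanSpace ℝ (Fin (n+1)))
        + (t:ℝ) • (s : EuclideanSpace ℝ (Fin (n+1)))‖^2 = _
    rw [norm_add_sq_real, norm_smul, norm_smul, real_inner_smul_left, real_inner_smul_right,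
      hφ, hs, Real.norm_eq_abs, Real.norm_eq_abs, abs_of_nonneg (by linarith), abs_of_nonneg ht0]
    ring
  have hcomm : ⟪(phi n s : EuclideanSpace ℝ (Fin (n+1))), (s : EuclideanSpace ℝ (Fin (n+1)))⟫
      = ⟪(s : EuclideanSpace ℝ (Fin (n+1))), (phi n s : EuclideanSpace ℝ (Fin (n+1)))⟫ :=
    real_inner_comm _ _
  have hpos : 0 < ‖vmap n (t, s)‖^2 := by
    rw [hsq, hcomm]
    nlinarith [sq_nonneg (2*(t:ℝ) - 1), mul_nonneg (by linarith : (0:ℝ) ≤ 1 - (t:ℝ)) ht0]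
  nlinarith [norm_nonneg (vmap n (t, s))]

lemma norm_norm_inv_smul (p : unitInterval × Sph n) :
    ‖‖vmap n p‖⁻¹ • vmap n p‖ = 1 := by
  rw [norm_smul, Real.norm_eq_abs, abs_of_nonneg (inv_nonneg.mpr (norm_nonneg _)),
    inv_mul_cancel₀ (norm_vmap_pos n p).ne']

def phiHomotopy : ContinuousMap.Homotopy (phi n) (ContinuousMap.id (Sph n)) where
  toFun p := ⟨‖vmap n p‖⁻¹ • vmap n p, by
    rw [mem_sphere_zero_iff_norm]; exact norm_norm_inv_smul n p⟩
  continuous_toFun := by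
    refine Continuous.subtype_mk ?_ _
    exact (((continuous_norm.comp (continuous_vmap n)).inv₀
      (fun p => (norm_vmap_pos n p).ne')).smul (continuous_vmap n))
  map_zero_left s := by
    apply Subtype.ext
    have hv : vmap n (0, s) = (phi n s : EuclideanSpace ℝ (Fin (n+1))) := by
      simp [vmap]
    show ‖vmap n (0, s)‖⁻¹ • vmap n (0, s) = _
    rw [hv, mem_sph n (phi n s), inv_one, one_smul]
  map_one_left s := by
    apply Subtype.ext
    have hv : vmap n (1, s) = (s : EuclideanSpace ℝ (Fin (n+1))) := by
      simp [vmap]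
    show ‖vmap n (1, s)‖⁻¹ • vmap n (1, s) = _
    rw [hv, mem_sph n s, inv_one, one_smul]
    rfl

lemma phi_homotopic_id : (phi n).Homotopic (ContinuousMap.id (Sph n)) := ⟨phiHomotopy n⟩

variable {X : Type*} [TopologicalSpace X]

def co (s : Sph n) : ℝ := (s : EuclideanSpace ℝ (Fin (n+1))) 0

lemma continuous_co : Continuous (co n) := (PiLp.continuous_apply _ _ 0).comp continuous_subtype_val

lemma co_spherePt : co n (spherePt n) = 1 := by
  show (EuclideanSpace.single 0 (1:ℝ)) 0 = 1
  simp [EuclideanSpace.single_apply]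

lemma phi_eq_pt' {s : Sph n} (h : 0 ≤ co n s) : phi n s = spherePt n := phi_eq_pt n h

def based (g : C(Sph n, X)) {x : X} (γ : Path (g (spherePt n)) x) : C(Sph n, X) :=
  ⟨fun s => if co n s ≤ 0 then g (phi n s) else γ.extend (co n s), by
    refine Continuous.if_le (g.continuous.comp (phi n).continuous)
      (γ.continuous_extend.comp (continuous_co n)) (continuous_co n) continuous_const ?_
    intro s hs
    rw [phi_eq_pt' n hs.ge, hs, Path.extend_zero]⟩

lemma based_pt (g : C(Sph n, X)) {x : X} (γ : Path (g (spherePt n)) x) :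
    based n g γ (spherePt n) = x := by
  show (if co n (spherePt n) ≤ 0 then g (phi n (spherePt n))
    else γ.extend (co n (spherePt n))) = x
  rw [co_spherePt, if_neg (by norm_num), Path.extend_one]

def basedHomotopy (g : C(Sph n, X)) {x : X} (γ : Path (g (spherePt n)) x) :
    ContinuousMap.Homotopy (based n g γ) (g.comp (phi n)) where
  toFun p := if co n p.2 ≤ 0 then g (phi n p.2)
    else γ.extend ((1 - (p.1 : ℝ)) * co n p.2)
  continuous_toFun := by
    refine Continuous.if_le ((g.continuous.comp (phi n).continuous).comp continuous_snd)
      (γ.continuous_extend.comp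
        ((continuous_const.sub (continuous_subtype_val.comp continuous_fst)).mul
          ((continuous_co n).comp continuous_snd)))
      ((continuous_co n).comp continuous_snd) continuous_const ?_
    intro p hp
    rw [phi_eq_pt' n hp.ge, hp, mul_zero, Path.extend_zero]
  map_zero_left s := by
    show (if co n s ≤ 0 then g (phi n s)
      else γ.extend ((1 - ((0 : unitInterval) : ℝ)) * co n s)) = _
    simp only [Set.Icc.coe_zero, sub_zero, one_mul]
    rfl
  map_one_left s := by
    show (if co n s ≤ 0 then g (phi n s)
      else γ.extend ((1 - ((1 : unitInterval) : ℝ)) * co n s)) = g (phi n s)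
    rcases le_or_gt (co n s) 0 with h | h
    · rw [if_pos h]
    · rw [if_neg h.not_ge, Set.Icc.coe_one, sub_self, zero_mul, Path.extend_zero,
        phi_eq_pt' n h.le]

lemma based_homotopic (g : C(Sph n, X)) {x : X} (γ : Path (g (spherePt n)) x) :
    (based n g γ).Homotopic g := by
  have h1 : (based n g γ).Homotopic (g.comp (phi n)) := ⟨basedHomotopy n g γ⟩
  have h2 : (g.comp (phi n)).Homotopic (g.comp (ContinuousMap.id (Sph n))) :=
    ContinuousMap.Homotopic.comp (ContinuousMap.Homotopic.refl g) (phi_homotopic_id n)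
  simpa [ContinuousMap.comp_id] using h1.trans h2

lemma exists_based [PathConnectedSpace X]
    (hg : ∃ g : C(Sph n, X), Essential g) (x : X) :
    ∃ f : C(Sph n, X), f (spherePt n) = x ∧ Essential f := by
  obtain ⟨g, hg⟩ := hg
  obtain ⟨γ⟩ := PathConnectedSpace.joined (g (spherePt n)) x
  refine ⟨based n g γ, based_pt n g γ, ?_⟩
  intro y hy
  exact hg y (((based_homotopic n g γ).symm).trans hy)


end Stmt11Aux
end

/-- a product with infinitely many factors admitting essential
maps `S^n → X_i` is perfectly `π_n`-wild. -/
theorem stmt11 {I : Type*} (n : ℕ) (hn : 1 ≤ n) (X : I → Type*)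
    [∀ i, TopologicalSpace (X i)] [∀ i, T2Space (X i)] [∀ i, PathConnectedSpace (X i)]
    (hinf : {i : I | ∃ g : C(Sph n, X i), Essential g}.Infinite) :
    ∀ x : ∀ i, X i, IsWildPoint n x := by
  classical
  intro x
  set S := {i : I | ∃ g : C(Sph n, X i), Essential g} with hS
  let e : ℕ ↪ S := hinf.natEmbedding
  let ι : ℕ → I := fun k => (e k : I)
  have hι : Function.Injective ι := fun a b hab => e.injective (Subtype.ext hab)
  have hmem : ∀ k, ∃ g : C(Sph n, X (ι k)), Essential g := fun k => (e k).2
  choose f0 hf0 hfe using fun k => Stmt11Aux.exists_based n (hmem k) (x (ι k))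
  let F : ℕ → C(Sph n, ∀ i, X i) := fun k =>
    ⟨fun s => Function.update x (ι k) (f0 k s), by
      apply continuous_pi
      intro j
      rcases eq_or_ne j (ι k) with rfl | hj
      · simp only [Function.update_self]
        exact (f0 k).continuous
      · simp only [Function.update_of_ne hj]
        exact continuous_const⟩
  have hFapp : ∀ k s, F k s = Function.update x (ι k) (f0 k s) := fun k s => rfl
  refine ⟨F, ?_, ?_, ?_⟩
  · intro k
    rw [hFapp, hf0, Function.update_eq_self]
  · intro k c hc
    let π : C((∀ i, X i), X (ι k)) := ⟨fun y => y (ι k), continuous_apply _⟩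
    have h1 : (π.comp (F k)).Homotopic (π.comp (ContinuousMap.const (Sph n) c)) :=
      ContinuousMap.Homotopic.comp (ContinuousMap.Homotopic.refl π) hc
    have h2 : π.comp (F k) = f0 k := by
      ext s
      show Function.update x (ι k) (f0 k s) (ι k) = f0 k s
      rw [Function.update_self]
    have h3 : π.comp (ContinuousMap.const (Sph n) c)
        = ContinuousMap.const (Sph n) (c (ι k)) := rfl
    rw [h2, h3] at h1
    exact hfe k (c (ι k)) h1
  · rw [ContinuousMap.tendsto_nhds_compactOpen]
    intro K hK U hU hmap
    rcases K.eq_empty_or_nonempty with rfl | ⟨s₀, hs₀⟩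
    · filter_upwards with k
      exact Set.mapsTo_empty _ _
    · have hxU : x ∈ U := hmap hs₀
      obtain ⟨J, u, hu, hsub⟩ := isOpen_pi_iff.mp hU x hxU
      have hfin : (ι ⁻¹' (J : Set I)).Finite :=
        Set.Finite.preimage (hι.injOn) J.finite_toSet
      have hev : ∀ᶠ k in atTop, ι k ∉ (J : Set I) := by
        rw [← Nat.cofinite_eq_atTop]
        exact hfin.eventually_cofinite_notMem
      filter_upwards [hev] with k hk
      intro s _
      apply hsub
      intro j hj
      have hjk : j ≠ ι k := by rintro rfl; exact hk hj
      show Function.update x (ι k) (f0 k s) j ∈ u j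
      rw [Function.update_of_ne hjk]
      exact (hu j hj).2
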